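/- The problem of maximizing min_{i ≠ b} G_i(α_b, α_i) over feasible allocations α (α_{i,j} ≥ 0, Σ_{i,j} α_{i,j} = 1) has a unique optimal solution α*. Equivalently, there is exactly one strictly positive feasible allocation satisfying simultaneously: α_{i,j}/(σ_{i,j} w_j) = α_{i,j'}/(σ_{i,j'} w_{j'}) for all i ≠ b and all j, j'; (α_{b,j}/σ_{b,j})² = Σ_{i ≠ b} (α_{i,j}/σ_{i,j})² for all j; and G_i(α_b, α_i) = G_{i'}(α_b, α_{i'}) for all i ≠ i' with i, i' ≠ b. -/

import Mathlib

open Finset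

private lemma tangent' (d x r : ℝ) (hx : 0 < x) :
    r*(2*d) - r^2*x ≤ d^2/x := by
  rw [le_div_iff₀ hx]
  nlinarith [sq_nonneg (d - r*x)]

private lemma tangent'_strict (d x r : ℝ) (hx : 0 < x) (hne : d ≠ r * x) :
    r*(2*d) - r^2*x < d^2/x := by
  rw [lt_div_iff₀ hx]
  have h : 0 < (d - r*x)^2 := by
    have : d - r*x ≠ 0 := sub_ne_zero.mpr hne
    positivity
  nlinarith

private lemma tangent2' (d x ρ : ℝ) (hx : 0 < x) :
    ρ*(2*d) - ρ^2*(d^2/x) ≤ x := by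
  have h : d^2/x * x = d^2 := div_mul_cancel₀ _ hx.ne'
  nlinarith [sq_nonneg (x - ρ*d)]

private lemma tangent2'_strict (d x ρ : ℝ) (hx : 0 < x) (hne : x ≠ ρ * d) :
    ρ*(2*d) - ρ^2*(d^2/x) < x := by
  have h : d^2/x * x = d^2 := div_mul_cancel₀ _ hx.ne'
  have h2 : 0 < (x - ρ*d)^2 := by
    have : x - ρ*d ≠ 0 := sub_ne_zero.mpr hne
    positivity
  nlinarith

private lemma sq_eq_of_pos {a c : ℝ} (ha : 0 < a) (hc : 0 < c) (h : a^2 = c^2) : a = c := by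
  nlinarith

set_option maxHeartbeats 4000000 in
theorem stmt_1
    {K D : ℕ} (hK : 2 ≤ K) (hD : 1 ≤ D)
    (b : Fin K)
    (μ : Fin K → Fin D → ℝ)
    (σ : Fin K → Fin D → ℝ) (hσ : ∀ i j, 0 < σ i j)
    (w : Fin D → ℝ) (hw : ∀ j, 0 < w j) (hw1 : ∑ j, w j = 1)
    (μbar : Fin K → ℝ) (hμbar : ∀ i, μbar i = ∑ j, w j * μ i j)
    (hbest : ∀ i, i ≠ b → μbar i < μbar b)
    (G : Fin K → (Fin K → Fin D → ℝ) → ℝ)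
    (hGpos : ∀ i α, (∀ j, 0 < α b j) → (∀ j, 0 < α i j) →
      G i α = (μbar b - μbar i) ^ 2 /
        (2 * (∑ j, (σ b j) ^ 2 * (w j) ^ 2 / α b j
            + ∑ j, (σ i j) ^ 2 * (w j) ^ 2 / α i j)))
    (hGzero : ∀ i α, (∃ j, α b j = 0 ∨ α i j = 0) → G i α = 0) :
    (∃! α : Fin K → Fin D → ℝ,
      (∀ i j, 0 ≤ α i j) ∧ (∑ i, ∑ j, α i j = 1) ∧
      (∀ α' : Fin K → Fin D → ℝ, (∀ i j, 0 ≤ α' i j) → ∑ i, ∑ j, α' i j = 1 →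
        (⨅ i : {i : Fin K // i ≠ b}, G i.1 α') ≤ ⨅ i : {i : Fin K // i ≠ b}, G i.1 α))
    ∧
    (∃! α : Fin K → Fin D → ℝ,
      (∀ i j, 0 < α i j) ∧ (∑ i, ∑ j, α i j = 1) ∧
      (∀ i, i ≠ b → ∀ j j' : Fin D,
        α i j / (σ i j * w j) = α i j' / (σ i j' * w j')) ∧
      (∀ j, (α b j / σ b j) ^ 2 = ∑ i ∈ univ.erase b, (α i j / σ i j) ^ 2) ∧
      (∀ i i' : Fin K, i ≠ b → i' ≠ b → i ≠ i' → G i α = G i' α)) := by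
  haveI : NeZero D := ⟨by omega⟩
  haveI : NeZero K := ⟨by omega⟩
  set δ : Fin K → ℝ := fun i => μbar b - μbar i with hδdef
  have hδ : ∀ i ∈ univ.erase b, 0 < δ i := fun i hi =>
    sub_pos.mpr (hbest i (mem_erase.mp hi).1)
  set S : Fin K → ℝ := fun i => ∑ j, σ i j * w j with hSdef
  have hS : ∀ i, 0 < S i := fun i =>
    Finset.sum_pos (fun j _ => mul_pos (hσ i j) (hw j)) univ_nonempty
  have hE : (univ.erase b).Nonempty := by
    obtain ⟨i, hi⟩ := Fintype.exists_ne_of_one_lt_card (by simp; omega) b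
    exact ⟨i, mem_erase.mpr ⟨hi, mem_univ i⟩⟩
  set Af : (Fin K → Fin D → ℝ) → Fin K → ℝ :=
    fun β i => ∑ j, (σ i j * w j)^2 / β i j with hAfdef
  have hApos : ∀ (β : Fin K → Fin D → ℝ) i, (∀ j, 0 < β i j) → 0 < Af β i := by
    intro β i h
    exact Finset.sum_pos
      (fun j _ => div_pos (pow_pos (mul_pos (hσ i j) (hw j)) 2) (h j)) univ_nonempty
  have hGf : ∀ i (β : Fin K → Fin D → ℝ), (∀ j, 0 < β b j) → (∀ j, 0 < β i j) →
      G i β = δ i ^ 2 / (2 * (Af β b + Af β i)) := by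
    intro i β h1 h2
    rw [hGpos i β h1 h2]
    simp only [hδdef, hAfdef, mul_pow]
  -- facts about proportional allocations
  have hAprop : ∀ (ρ : Fin K → ℝ) i, ρ i ≠ 0 →
      Af (fun i' j => ρ i' * (σ i' j * w j)) i = S i / ρ i := by
    intro ρ i hρ
    have hcong : ∀ j ∈ (univ : Finset (Fin D)),
        (σ i j * w j)^2 / (ρ i * (σ i j * w j)) = (σ i j * w j)/ρ i := by
      intro j _
      have hd : σ i j * w j ≠ 0 := (mul_pos (hσ i j) (hw j)).ne'
      field_simp
    simp only [hAfdef, hSdef]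
    rw [Finset.sum_congr rfl hcong, ← Finset.sum_div]
  have rowsum : ∀ (ρ : Fin K → ℝ) i, ∑ j, ρ i * (σ i j * w j) = ρ i * S i := by
    intro ρ i; rw [← Finset.mul_sum, hSdef]
  have hGprop : ∀ (ρ : Fin K → ℝ) (γ : ℝ), (∀ i, 0 < ρ i) → 0 < γ →
      (∀ i ∈ univ.erase b, S b / ρ b + S i / ρ i = δ i ^ 2 / (2 * γ)) →
      ∀ i ∈ univ.erase b, G i (fun i' j => ρ i' * (σ i' j * w j)) = γ := by
    intro ρ γ hρ hγ hr i hi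
    have hbpos : ∀ j, 0 < ρ b * (σ b j * w j) :=
      fun j => mul_pos (hρ b) (mul_pos (hσ b j) (hw j))
    have hipos : ∀ j, 0 < ρ i * (σ i j * w j) :=
      fun j => mul_pos (hρ i) (mul_pos (hσ i j) (hw j))
    rw [hGf i _ hbpos hipos, hAprop ρ b (hρ b).ne', hAprop ρ i (hρ i).ne', hr i hi]
    have hδi := hδ i hi
    field_simp
  -- key lemma
  have key : ∀ (ρ : Fin K → ℝ) (γ : ℝ), (∀ i, 0 < ρ i) → (∑ i, ρ i * S i = 1) →
      (∑ i ∈ univ.erase b, ρ i ^ 2 = ρ b ^ 2) → 0 < γ →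
      (∀ i ∈ univ.erase b, S b / ρ b + S i / ρ i = δ i ^ 2 / (2 * γ)) →
      ∀ α' : Fin K → Fin D → ℝ, (∀ i j, 0 ≤ α' i j) → (∑ i, ∑ j, α' i j = 1) →
      (∀ i ∈ univ.erase b, γ ≤ G i α') → ∀ i j, α' i j = ρ i * (σ i j * w j) := by
    intro ρ γ hρ hsum hbal hγ hrate α' hpos hsum' hge
    have hpos' : ∀ i j, 0 < α' i j := by
      intro i j
      rcases (hpos i j).lt_or_eq with h | h
      · exact h
      · exfalso
        by_cases hib : i = b
        · obtain ⟨i₁, hi₁⟩ := hE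
          have hz := hGzero i₁ α' ⟨j, Or.inl (by rw [← hib]; exact h.symm)⟩
          have hh := hge i₁ hi₁
          rw [hz] at hh; exact absurd hh (not_le.mpr hγ)
        · have hz := hGzero i α' ⟨j, Or.inr h.symm⟩
          have hh := hge i (mem_erase.mpr ⟨hib, mem_univ i⟩)
          rw [hz] at hh; exact absurd hh (not_le.mpr hγ)
    have hAbpos : 0 < Af α' b := hApos α' b (fun j => hpos' b j)
    have hconstr : ∀ i ∈ univ.erase b, Af α' b + Af α' i ≤ S b/ρ b + S i/ρ i := by
      intro i hi
      have hg := hge i hi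
      rw [hGf i α' (fun j => hpos' b j) (fun j => hpos' i j)] at hg
      have hX : 0 < Af α' b + Af α' i := by
        linarith [hApos α' i (fun j => hpos' i j)]
      have h2 : γ * (2*(Af α' b + Af α' i)) ≤ δ i^2 := by
        rw [le_div_iff₀ (by positivity)] at hg; linarith
      rw [hrate i hi, le_div_iff₀ (by positivity : (0:ℝ) < 2*γ)]
      nlinarith
    have hrow : ∀ i ∈ univ.erase b,
        ρ i * (2*S i) - ρ i^2 * Af α' i ≤ ∑ j, α' i j := by
      intro i hi
      have hper : ∀ j ∈ (univ : Finset (Fin D)),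
          ρ i*(2*(σ i j*w j)) - ρ i^2*((σ i j*w j)^2/α' i j) ≤ α' i j :=
        fun j _ => tangent2' _ _ _ (hpos' i j)
      have hs := Finset.sum_le_sum hper
      have hL : ∑ j, (ρ i*(2*(σ i j*w j)) - ρ i^2*((σ i j*w j)^2/α' i j))
          = ρ i * (2*S i) - ρ i^2 * Af α' i := by
        simp only [hAfdef, hSdef, Finset.sum_sub_distrib, ← Finset.mul_sum]
      rw [hL] at hs
      exact hs
    have h3 : ∀ i ∈ univ.erase b,
        ρ i*S i + ρ i^2*(Af α' b - S b/ρ b) ≤ ∑ j, α' i j := by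
      intro i hi
      have hc := hconstr i hi
      have hid : ρ i^2*(S i/ρ i) = ρ i*S i := by
        field_simp [(hρ i).ne']
      have hmul : ρ i^2*Af α' i ≤ ρ i^2*(S b/ρ b + S i/ρ i - Af α' b) :=
        mul_le_mul_of_nonneg_left (by linarith) (sq_nonneg _)
      have hrw : ρ i^2*(S b/ρ b + S i/ρ i - Af α' b)
          = ρ i^2*(S b/ρ b) + ρ i*S i - ρ i^2*Af α' b := by
        rw [mul_sub, mul_add, hid]
      have hrw2 : ρ i^2*(Af α' b - S b/ρ b) = ρ i^2*Af α' b - ρ i^2*(S b/ρ b) :=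
        mul_sub _ _ _
      have h := hrow i hi
      nlinarith
    have hQb : ∑ i ∈ univ.erase b, (∑ j, α' i j) = 1 - ∑ j, α' b j := by
      have h : (∑ i ∈ univ.erase b, ∑ j, α' i j) + ∑ j, α' b j = 1 := by
        rw [Finset.sum_erase_add univ _ (mem_univ b)]; exact hsum'
      linarith
    have hρS : ∑ i ∈ univ.erase b, ρ i * S i = 1 - ρ b * S b := by
      have h : (∑ i ∈ univ.erase b, ρ i * S i) + ρ b * S b = 1 := by
        rw [Finset.sum_erase_add univ _ (mem_univ b)]; exact hsum
      linarith
    have hAb_ub : ρ b^2*Af α' b ≤ 2*(ρ b*S b) - ∑ j, α' b j := by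
      have hs := Finset.sum_le_sum h3
      have hLs : ∑ i ∈ univ.erase b, (ρ i*S i + ρ i^2*(Af α' b - S b/ρ b))
          = (1 - ρ b*S b) + ρ b^2*(Af α' b - S b/ρ b) := by
        rw [Finset.sum_add_distrib, hρS, ← Finset.sum_mul, hbal]
      rw [hLs, hQb] at hs
      have hid : ρ b^2*(S b/ρ b) = ρ b*S b := by
        field_simp [(hρ b).ne']
      have hexp : ρ b^2*(Af α' b - S b/ρ b) = ρ b^2*Af α' b - ρ b*S b := by
        rw [mul_sub, hid]
      linarith
    have hbrow : ∀ j, α' b j = ρ b * (σ b j * w j) := by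
      by_contra hcon
      push_neg at hcon
      obtain ⟨j₀, hj₀⟩ := hcon
      have hper : ∀ j ∈ (univ : Finset (Fin D)),
          (1/ρ b)*(2*(σ b j*w j)) - (1/ρ b)^2*α' b j ≤ (σ b j*w j)^2/α' b j :=
        fun j _ => tangent' _ _ _ (hpos' b j)
      have hnej : σ b j₀*w j₀ ≠ (1/ρ b) * α' b j₀ := by
        intro hcontra
        apply hj₀
        rw [hcontra, ← mul_assoc, mul_one_div, div_self (hρ b).ne', one_mul]
      have hstrict := tangent'_strict (σ b j₀*w j₀) (α' b j₀) (1/ρ b) (hpos' b j₀) hnej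
      have hlt := Finset.sum_lt_sum hper ⟨j₀, mem_univ j₀, hstrict⟩
      have hLs : ∑ j, ((1/ρ b)*(2*(σ b j*w j)) - (1/ρ b)^2*α' b j)
          = (1/ρ b)*(2*S b) - (1/ρ b)^2*(∑ j, α' b j) := by
        simp only [hSdef, Finset.sum_sub_distrib, ← Finset.mul_sum]
      have hRs : ∑ j, (σ b j*w j)^2/α' b j = Af α' b := rfl
      rw [hLs, hRs] at hlt
      have hρb := hρ b
      have e1 : ρ b^2*((1/ρ b)*(2*S b)) = 2*(ρ b*S b) := by
        field_simp
      have e2 : ρ b^2*((1/ρ b)^2*(∑ j, α' b j)) = ∑ j, α' b j := by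
        field_simp
      nlinarith [mul_lt_mul_of_pos_left hlt (by positivity : (0:ℝ) < ρ b^2)]
    have hAb : Af α' b = S b/ρ b := by
      have h1 : Af α' b = ∑ j, (σ b j*w j)^2/(ρ b*(σ b j*w j)) := by
        simp only [hAfdef]
        exact Finset.sum_congr rfl fun j _ => by rw [hbrow j]
      have h2 : ∀ j ∈ (univ : Finset (Fin D)),
          (σ b j*w j)^2/(ρ b*(σ b j*w j)) = (σ b j*w j)/ρ b := by
        intro j _
        have hd : σ b j * w j ≠ 0 := (mul_pos (hσ b j) (hw j)).ne'
        field_simp [hd, (hρ b).ne']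
      rw [h1, Finset.sum_congr rfl h2, ← Finset.sum_div]
    have hPb : ∑ j, α' b j = ρ b*S b := by
      calc ∑ j, α' b j = ∑ j, ρ b * (σ b j * w j) :=
            Finset.sum_congr rfl fun j _ => hbrow j
      _ = ρ b*S b := rowsum ρ b
    have hge' : ∀ i ∈ univ.erase b, ρ i*S i ≤ ∑ j, α' i j := by
      intro i hi
      have h := h3 i hi
      have h0 : Af α' b - S b/ρ b = 0 := sub_eq_zero.mpr hAb
      rw [h0, mul_zero, add_zero] at h
      exact h
    have hQ : ∀ i ∈ univ.erase b, ∑ j, α' i j = ρ i*S i := by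
      have hsumeq : ∑ i ∈ univ.erase b, (ρ i*S i) = ∑ i ∈ univ.erase b, ∑ j, α' i j := by
        rw [hρS, hQb, hPb]
      intro i hi
      exact ((Finset.sum_eq_sum_iff_of_le hge').mp hsumeq i hi).symm
    have hconstr' : ∀ i ∈ univ.erase b, Af α' i ≤ S i/ρ i := by
      intro i hi
      have h := hconstr i hi
      rw [hAb] at h
      linarith
    intro i j
    by_cases hib : i = b
    · subst hib; exact hbrow j
    · have hiE : i ∈ univ.erase b := mem_erase.mpr ⟨hib, mem_univ i⟩
      by_contra hne
      have hper : ∀ j' ∈ (univ : Finset (Fin D)),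
          ρ i*(2*(σ i j'*w j')) - ρ i^2*((σ i j'*w j')^2/α' i j') ≤ α' i j' :=
        fun j' _ => tangent2' _ _ _ (hpos' i j')
      have hstrict := tangent2'_strict (σ i j*w j) (α' i j) (ρ i) (hpos' i j)
        (fun hcontra => hne (by rw [hcontra]))
      have hlt := Finset.sum_lt_sum hper ⟨j, mem_univ j, hstrict⟩
      have hLs : ∑ j', (ρ i*(2*(σ i j'*w j')) - ρ i^2*((σ i j'*w j')^2/α' i j'))
          = ρ i*(2*S i) - ρ i^2*Af α' i := by
        simp only [hAfdef, hSdef, Finset.sum_sub_distrib, ← Finset.mul_sum]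
      rw [hLs, hQ i hiE] at hlt
      have hid : ρ i^2*(S i/ρ i) = ρ i*S i := by
        field_simp [(hρ i).ne']
      have hcc := hconstr' i hiE
      have hmul := mul_le_mul_of_nonneg_left hcc (sq_nonneg (ρ i))
      rw [hid] at hmul
      linarith
  -- construction of the balanced solution
  obtain ⟨ρ, γstar, hρpos, hρsum, hρbal, hγpos, hρrate⟩ :
      ∃ (ρ : Fin K → ℝ) (γstar : ℝ), (∀ i, 0 < ρ i) ∧ (∑ i, ρ i * S i = 1) ∧
        (∑ i ∈ univ.erase b, ρ i ^ 2 = ρ b ^ 2) ∧ 0 < γstar ∧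
        (∀ i ∈ univ.erase b, S b / ρ b + S i / ρ i = δ i ^ 2 / (2 * γstar)) := by
    obtain ⟨i₀, hi₀E, hi₀min⟩ := Finset.exists_min_image (univ.erase b) (fun i => δ i ^ 2) hE
    have hSb := hS b
    have hS₀ := hS i₀
    have hδ₀ := hδ i₀ hi₀E
    have hKr1 : (1:ℝ) ≤ (K:ℝ) := by
      have : (1:ℕ) ≤ K := by omega
      exact_mod_cast this
    set g₁ : ℝ := δ i₀ ^ 2 / (2 * (S b ^ 2 + S i₀ * S b)) with hg₁def
    set g₀ : ℝ := (univ.erase b).inf' hE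
      (fun i => δ i ^ 2 / (2 * (S b ^ 2 + S i * S b * K))) with hg₀def
    have hg₀pos : 0 < g₀ := by
      rw [hg₀def, Finset.lt_inf'_iff]
      intro i hi
      have h1 := hδ i hi
      have h2 := hS i
      have hK0 : (0:ℝ) < (K:ℝ) := by linarith
      positivity
    have hg₁pos : 0 < g₁ := by rw [hg₁def]; positivity
    have hg₀le : g₀ ≤ g₁ := by
      have h : g₀ ≤ δ i₀ ^ 2 / (2 * (S b ^ 2 + S i₀ * S b * K)) := by
        rw [hg₀def]
        exact Finset.inf'_le _ hi₀E
      have h2 : δ i₀ ^ 2 / (2 * (S b ^ 2 + S i₀ * S b * K)) ≤ g₁ := by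
        rw [hg₁def]
        have hK0 : (0:ℝ) < (K:ℝ) := by linarith
        apply div_le_div_of_nonneg_left (sq_nonneg _) (by positivity)
        have hm := mul_le_mul_of_nonneg_left hKr1 (mul_pos hS₀ hSb).le
        nlinarith [hm]
      linarith
    have hdenlb : ∀ g, 0 < g → g ≤ g₁ → ∀ i ∈ univ.erase b,
        S i₀ * S b ≤ δ i ^ 2 / (2 * g) - S b ^ 2 := by
      intro g hg hgle i hi
      have h1 : δ i₀ ^ 2 / (2 * g₁) = S b ^ 2 + S i₀ * S b := by
        rw [hg₁def]
        field_simp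
      have h2 : δ i₀ ^ 2 / (2 * g₁) ≤ δ i ^ 2 / (2 * g) :=
        div_le_div₀ (sq_nonneg (δ i)) (hi₀min i hi) (by linarith) (by linarith)
      linarith
    set H : ℝ → ℝ :=
      fun g => ∑ i ∈ univ.erase b, (S i / (δ i ^ 2 / (2 * g) - S b ^ 2)) ^ 2 with hHdef
    have hcont : ContinuousOn H (Set.Icc g₀ g₁) := by
      rw [hHdef]
      apply continuousOn_finset_sum
      intro i hi
      apply ContinuousOn.pow
      apply ContinuousOn.div continuousOn_const
      · apply ContinuousOn.sub ?_ continuousOn_const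
        apply ContinuousOn.div continuousOn_const
          ((continuous_const.mul continuous_id).continuousOn)
        intro x hx
        have : 0 < x := lt_of_lt_of_le hg₀pos hx.1
        exact (mul_pos two_pos this).ne'
      · intro x hx
        have h1 := hdenlb x (lt_of_lt_of_le hg₀pos hx.1) hx.2 i hi
        have h2 : 0 < S i₀ * S b := mul_pos hS₀ hSb
        exact ne_of_gt (lt_of_lt_of_le h2 h1)
    have hden₁ : δ i₀ ^ 2 / (2 * g₁) - S b ^ 2 = S i₀ * S b := by
      rw [hg₁def]
      field_simp
      ring
    have hH₁ : 1 / S b ^ 2 ≤ H g₁ := by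
      rw [hHdef]
      have hterm : (S i₀ / (δ i₀ ^ 2 / (2 * g₁) - S b ^ 2)) ^ 2 = 1 / S b ^ 2 := by
        rw [hden₁]
        rw [div_pow, mul_pow]
        rw [div_eq_div_iff (by positivity) (by positivity)]
        ring
      calc 1 / S b ^ 2 = (S i₀ / (δ i₀ ^ 2 / (2 * g₁) - S b ^ 2)) ^ 2 := hterm.symm
      _ ≤ ∑ i ∈ univ.erase b, (S i / (δ i ^ 2 / (2 * g₁) - S b ^ 2)) ^ 2 :=
          Finset.single_le_sum (f := fun i => (S i / (δ i ^ 2 / (2 * g₁) - S b ^ 2)) ^ 2)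
            (fun i _ => sq_nonneg _) hi₀E
    have hH₀ : H g₀ ≤ 1 / S b ^ 2 := by
      rw [hHdef]
      have hbound : ∀ i ∈ univ.erase b,
          (S i / (δ i ^ 2 / (2 * g₀) - S b ^ 2)) ^ 2 ≤ 1/(S b * K)^2 := by
        intro i hi
        have hSi := hS i
        have hle : g₀ ≤ δ i ^ 2 / (2 * (S b ^ 2 + S i * S b * K)) := by
          rw [hg₀def]; exact Finset.inf'_le _ hi
        have hK0 : (0:ℝ) < (K:ℝ) := by linarith
        have hge : S b ^ 2 + S i * S b * K ≤ δ i ^ 2 / (2 * g₀) := by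
          rw [le_div_iff₀ (by positivity : (0:ℝ) < 2*g₀)]
          rw [le_div_iff₀ (by positivity : (0:ℝ) < 2 * (S b ^ 2 + S i * S b * K))] at hle
          nlinarith
        have hden : S i * S b * K ≤ δ i ^ 2/(2*g₀) - S b^2 := by linarith
        have hdenpos : 0 < S i * S b * (K:ℝ) := by positivity
        have h5 : S i / (δ i ^ 2 / (2 * g₀) - S b ^ 2) ≤ S i / (S i * S b * K) :=
          div_le_div_of_nonneg_left hSi.le hdenpos hden
        have h6 : S i / (S i * S b * (K:ℝ)) = 1/(S b * K) := by
          rw [div_eq_div_iff (by positivity) (by positivity)]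
          ring
        have h7 : 0 ≤ S i / (δ i ^ 2 / (2 * g₀) - S b ^ 2) :=
          div_nonneg hSi.le (by linarith)
        calc (S i / (δ i ^ 2 / (2 * g₀) - S b ^ 2)) ^ 2
            ≤ (1/(S b * K)) ^ 2 := by
              apply pow_le_pow_left₀ h7 (h5.trans_eq h6)
        _ = 1/(S b * K)^2 := by rw [div_pow, one_pow]
      have hsum := Finset.sum_le_card_nsmul _ _ _ hbound
      have hcard : (univ.erase b).card = K - 1 := by
        rw [card_erase_of_mem (mem_univ b), card_univ, Fintype.card_fin]
      rw [hcard, nsmul_eq_mul] at hsum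
      have hcastle : ((K-1:ℕ):ℝ) ≤ (K:ℝ) := by
        exact_mod_cast Nat.sub_le K 1
      have hfin : ((K-1:ℕ):ℝ) * (1/(S b * K)^2) ≤ 1 / S b ^ 2 := by
        rw [mul_one_div, div_le_div_iff₀ (by positivity) (by positivity)]
        have hx1 : ((K-1:ℕ):ℝ) * S b^2 ≤ (K:ℝ) * S b^2 :=
          mul_le_mul_of_nonneg_right hcastle (sq_nonneg _)
        have hx2 : (K:ℝ) * S b ^ 2 * 1 ≤ (K:ℝ) * S b^2 * (K:ℝ) :=
          mul_le_mul_of_nonneg_left hKr1 (by positivity)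
        nlinarith [hx1, hx2]
      linarith
    obtain ⟨gs, hgsIcc, hgsval⟩ := intermediate_value_Icc hg₀le hcont ⟨hH₀, hH₁⟩
    have hgspos : 0 < gs := lt_of_lt_of_le hg₀pos hgsIcc.1
    have hdgs : ∀ i ∈ univ.erase b, 0 < δ i ^ 2 / (2 * gs) - S b ^ 2 := fun i hi =>
      lt_of_lt_of_le (mul_pos hS₀ hSb) (hdenlb gs hgspos hgsIcc.2 i hi)
    set ρh : Fin K → ℝ :=
      fun i => if i = b then 1 / S b else S i / (δ i ^ 2 / (2 * gs) - S b ^ 2) with hρh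
    have hρhb : ρh b = 1 / S b := by rw [hρh]; simp
    have hρhi : ∀ i ∈ univ.erase b, ρh i = S i / (δ i ^ 2/(2*gs) - S b^2) := by
      intro i hi
      rw [hρh]
      simp [(mem_erase.mp hi).1]
    have hρhpos : ∀ i, 0 < ρh i := by
      intro i
      by_cases h : i = b
      · rw [h, hρhb]; positivity
      · rw [hρhi i (mem_erase.mpr ⟨h, mem_univ i⟩)]
        exact div_pos (hS i) (hdgs i (mem_erase.mpr ⟨h, mem_univ i⟩))
    have hbalh : ∑ i ∈ univ.erase b, ρh i ^ 2 = ρh b ^ 2 := by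
      rw [hρhb]
      calc ∑ i ∈ univ.erase b, ρh i ^2
          = ∑ i ∈ univ.erase b, (S i / (δ i ^ 2/(2*gs) - S b^2))^2 :=
            Finset.sum_congr rfl (fun i hi => by rw [hρhi i hi])
      _ = H gs := by rw [hHdef]
      _ = 1/S b^2 := hgsval
      _ = (1/S b)^2 := by rw [div_pow, one_pow]
    have hrateh : ∀ i ∈ univ.erase b, S b / ρh b + S i / ρh i = δ i ^ 2 / (2 * gs) := by
      intro i hi
      rw [hρhb, hρhi i hi]
      have hX : 0 < δ i ^ 2 / (2 * gs) - S b ^ 2 := hdgs i hi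
      have h1 : S b / (1/S b) = S b^2 := by
        field_simp
      have h2 : S i / (S i / (δ i ^ 2 / (2 * gs) - S b ^ 2)) = δ i ^ 2 / (2 * gs) - S b ^ 2 := by
        rw [div_div_eq_mul_div, mul_comm, mul_div_assoc, div_self (hS i).ne', mul_one]
      rw [h1, h2]
      ring
    set T : ℝ := ∑ i, ρh i * S i with hT
    have hTpos : 0 < T :=
      Finset.sum_pos (fun i _ => mul_pos (hρhpos i) (hS i)) univ_nonempty
    refine ⟨fun i => ρh i / T, gs / T, ?_, ?_, ?_, ?_, ?_⟩
    · intro i; exact div_pos (hρhpos i) hTpos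
    · calc ∑ i, ρh i / T * S i = (∑ i, ρh i * S i)/T := by
            rw [Finset.sum_div]
            exact Finset.sum_congr rfl fun i _ => by ring
      _ = 1 := div_self hTpos.ne'
    · calc ∑ i ∈ univ.erase b, (ρh i/T)^2
          = (∑ i ∈ univ.erase b, ρh i^2)/T^2 := by
            rw [Finset.sum_div]
            exact Finset.sum_congr rfl fun i _ => div_pow _ _ _
      _ = ρh b^2/T^2 := by rw [hbalh]
      _ = (ρh b/T)^2 := (div_pow _ _ _).symm
    · exact div_pos hgspos hTpos
    · intro i hi
      have e : ∀ a c : ℝ, a / (c / T) = T * (a / c) := by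
        intro a c
        rw [div_div_eq_mul_div, mul_comm a T, mul_div_assoc]
      rw [e, e, show 2*(gs/T) = (2*gs)/T by ring, e, ← mul_add, hrateh i hi]
  -- the witness
  set αs : Fin K → Fin D → ℝ := fun i j => ρ i * (σ i j * w j) with hαs
  have hαspos : ∀ i j, 0 < αs i j := fun i j => mul_pos (hρpos i) (mul_pos (hσ i j) (hw j))
  have hαssum : ∑ i, ∑ j, αs i j = 1 := by
    calc ∑ i, ∑ j, αs i j = ∑ i, ρ i * S i := Finset.sum_congr rfl fun i _ => rowsum ρ i
    _ = 1 := hρsum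
  have hGαs : ∀ i ∈ univ.erase b, G i αs = γstar := hGprop ρ γstar hρpos hγpos hρrate
  haveI hne : Nonempty {i : Fin K // i ≠ b} := by
    obtain ⟨i, hi⟩ := hE; exact ⟨⟨i, (mem_erase.mp hi).1⟩⟩
  have hiInf : (⨅ i : {i : Fin K // i ≠ b}, G i.1 αs) = γstar := by
    have h : (fun i : {i : Fin K // i ≠ b} => G i.1 αs) = fun _ => γstar :=
      funext fun i => hGαs i.1 (mem_erase.mpr ⟨i.2, mem_univ _⟩)
    rw [h, ciInf_const]
  have hmax : ∀ α' : Fin K → Fin D → ℝ, (∀ i j, 0 ≤ α' i j) → (∑ i, ∑ j, α' i j = 1) →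
      (⨅ i : {i : Fin K // i ≠ b}, G i.1 α') ≤ γstar := by
    intro α' h1 h2
    by_contra h
    push_neg at h
    have hge : ∀ i ∈ univ.erase b, γstar ≤ G i α' := by
      intro i hi
      exact le_trans h.le (ciInf_le (Finite.bddBelow_range _) (⟨i, (mem_erase.mp hi).1⟩ : {i : Fin K // i ≠ b}))
    have heq := key ρ γstar hρpos hρsum hρbal hγpos hρrate α' h1 h2 hge
    have hα'eq : α' = αs := funext fun i => funext fun j => heq i j
    rw [hα'eq, hiInf] at h
    exact lt_irrefl _ h
  constructor
  · -- first ∃!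
    refine ⟨αs, ⟨fun i j => (hαspos i j).le, hαssum, ?_⟩, ?_⟩
    · intro α' h1 h2; rw [hiInf]; exact hmax α' h1 h2
    · rintro α'' ⟨h1, h2, h3⟩
      have hge : ∀ i ∈ univ.erase b, γstar ≤ G i α'' := by
        intro i hi
        have hlow : γstar ≤ ⨅ i : {i : Fin K // i ≠ b}, G i.1 α'' := by
          have h := h3 αs (fun i j => (hαspos i j).le) hαssum
          rwa [hiInf] at h
        exact le_trans hlow (ciInf_le (Finite.bddBelow_range _) (⟨i, (mem_erase.mp hi).1⟩ : {i : Fin K // i ≠ b}))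
      exact funext fun i => funext fun j =>
        key ρ γstar hρpos hρsum hρbal hγpos hρrate α'' h1 h2 hge i j
  · -- second ∃!
    have hquot : ∀ (r:ℝ) (i : Fin K) (j : Fin D), r*(σ i j*w j)/σ i j = r*w j := by
      intro r i j
      rw [mul_comm (σ i j) (w j), ← mul_assoc, mul_div_assoc, div_self (hσ i j).ne', mul_one]
    refine ⟨αs, ⟨hαspos, hαssum, ?_, ?_, ?_⟩, ?_⟩
    · intro i _ j j'
      show ρ i * (σ i j * w j) / (σ i j * w j) = ρ i * (σ i j' * w j') / (σ i j' * w j')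
      rw [mul_div_assoc, div_self (mul_pos (hσ i j) (hw j)).ne',
        mul_div_assoc, div_self (mul_pos (hσ i j') (hw j')).ne']
    · intro j
      have hL : αs b j / σ b j = ρ b * w j := hquot (ρ b) b j
      have hR : ∀ i ∈ univ.erase b, (αs i j / σ i j)^2 = ρ i^2 * w j^2 := by
        intro i _
        rw [hquot (ρ i) i j, mul_pow]
      rw [hL, Finset.sum_congr rfl hR, ← Finset.sum_mul, hρbal, mul_pow]
    · intro i i' hi hi' _
      rw [hGαs i (mem_erase.mpr ⟨hi, mem_univ i⟩), hGαs i' (mem_erase.mpr ⟨hi', mem_univ i'⟩)]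
    · rintro α'' ⟨h1, h2, h3, h4, h5⟩
      set j₀ : Fin D := ⟨0, by omega⟩ with hj₀def
      set ρ'' : Fin K → ℝ := fun i => α'' i j₀ / (σ i j₀ * w j₀) with hρ''def
      have hρ''pos : ∀ i, 0 < ρ'' i := fun i =>
        div_pos (h1 i j₀) (mul_pos (hσ i j₀) (hw j₀))
      have hrowprop : ∀ i, i ≠ b → ∀ j, α'' i j = ρ'' i * (σ i j * w j) := by
        intro i hi j
        have h := h3 i hi j j₀
        rw [hρ''def]
        dsimp only
        rw [← h, div_mul_cancel₀ _ (mul_pos (hσ i j) (hw j)).ne']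
      have hquot'' : ∀ i, i ≠ b → ∀ j, α'' i j / σ i j = ρ'' i * w j := by
        intro i hi j
        rw [hrowprop i hi j]
        exact hquot (ρ'' i) i j
      have hbal'' : ∑ i ∈ univ.erase b, ρ'' i ^ 2 = ρ'' b ^ 2 := by
        have h := h4 j₀
        have hL : α'' b j₀ / σ b j₀ = ρ'' b * w j₀ := by
          rw [hρ''def]
          dsimp only
          rw [div_mul_eq_mul_div, mul_comm (σ b j₀) (w j₀), ← div_div,
            mul_div_assoc, div_self (hw j₀).ne', mul_one]
        rw [hL] at h
        have hR : ∀ i ∈ univ.erase b, (α'' i j₀ / σ i j₀)^2 = ρ'' i^2 * w j₀^2 := by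
          intro i hi
          rw [hquot'' i (mem_erase.mp hi).1 j₀, mul_pow]
        rw [Finset.sum_congr rfl hR, ← Finset.sum_mul, mul_pow] at h
        have hw0 : (0:ℝ) < w j₀^2 := pow_pos (hw j₀) 2
        exact (mul_right_cancel₀ hw0.ne' h.symm)
      have hbrow'' : ∀ j, α'' b j = ρ'' b * (σ b j * w j) := by
        intro j
        have h := h4 j
        have hR : ∀ i ∈ univ.erase b, (α'' i j / σ i j)^2 = ρ'' i^2 * w j^2 := by
          intro i hi
          rw [hquot'' i (mem_erase.mp hi).1 j, mul_pow]
        rw [Finset.sum_congr rfl hR, ← Finset.sum_mul, hbal''] at h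
        have hsq : (α'' b j / σ b j)^2 = (ρ'' b * w j)^2 := by
          rw [h, mul_pow]
        have heq := sq_eq_of_pos (div_pos (h1 b j) (hσ b j))
          (mul_pos (hρ''pos b) (hw j)) hsq
        rw [div_eq_iff (hσ b j).ne'] at heq
        rw [heq]; ring
      have hallprop : ∀ i j, α'' i j = ρ'' i * (σ i j * w j) := by
        intro i j
        by_cases h : i = b
        · rw [h]; exact hbrow'' j
        · exact hrowprop i h j
      have hfun'' : α'' = fun i j => ρ'' i * (σ i j * w j) :=
        funext fun i => funext fun j => hallprop i j
      have hsum'' : ∑ i, ρ'' i * S i = 1 := by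
        rw [← h2]
        exact (Finset.sum_congr rfl fun i _ => by
          rw [Finset.sum_congr rfl fun j _ => hallprop i j, rowsum ρ'' i]).symm
      obtain ⟨i₁, hi₁⟩ := hE
      set γ'' : ℝ := G i₁ α'' with hγ''def
      have hG'' : ∀ i ∈ univ.erase b, G i α'' = γ'' := by
        intro i hi
        by_cases h : i = i₁
        · rw [h]
        · exact h5 i i₁ (mem_erase.mp hi).1 (mem_erase.mp hi₁).1 h
      have hγ''pos : 0 < γ'' := by
        rw [hγ''def, hGf i₁ α'' (fun j => h1 b j) (fun j => h1 i₁ j)]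
        have hb := hApos α'' b (fun j => h1 b j)
        have hib := hApos α'' i₁ (fun j => h1 i₁ j)
        have hd := hδ i₁ hi₁
        positivity
      have hrate'' : ∀ i ∈ univ.erase b, S b/ρ'' b + S i/ρ'' i = δ i^2/(2*γ'') := by
        intro i hi
        have h := hG'' i hi
        rw [hGf i α'' (fun j => h1 b j) (fun j => h1 i j)] at h
        rw [hfun'', hAprop ρ'' b (hρ''pos b).ne', hAprop ρ'' i (hρ''pos i).ne'] at h
        have hXpos : 0 < S b/ρ'' b + S i/ρ'' i := by
          have := hS b; have := hS i; have := hρ''pos b; have := hρ''pos i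
          positivity
        have h' : δ i^2 = γ'' * (2*(S b/ρ'' b + S i/ρ'' i)) := by
          rw [← h]
          field_simp
        rw [eq_div_iff (by positivity : (2:ℝ)*γ'' ≠ 0)]
        linarith
      rcases le_or_gt γstar γ'' with hle | hlt
      · have hge : ∀ i ∈ univ.erase b, γstar ≤ G i α'' := fun i hi =>
          le_trans hle (hG'' i hi).ge
        exact funext fun i => funext fun j =>
          key ρ γstar hρpos hρsum hρbal hγpos hρrate α'' (fun i j => (h1 i j).le) h2 hge i j
      · have hge : ∀ i ∈ univ.erase b, γ'' ≤ G i αs := fun i hi =>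
          (hGαs i hi).symm ▸ hlt.le
        have heq := key ρ'' γ'' hρ''pos hsum'' hbal'' hγ''pos hrate'' αs
          (fun i j => (hαspos i j).le) hαssum hge
        exact funext fun i => funext fun j => by
          rw [hallprop i j, ← heq i j]
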